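/- Let E ⊆ 𝕋 be an open subset of the circle written as an at most countable union of pairwise disjoint open arcs I_k with arc lengths l_k. Then for every h > 0, τ(h,E) ≤ 2·Σ_{k : l_k ≥ h} h + 2·Σ_{k : l_k < h} l_k, where the first sum is h times the number of arcs of length at least h. -/

import Mathlib

open MeasureTheory Set
open scoped ENNReal

/-- `τ(h,E)`: the measure of the set where the characteristic function of `E`
translated by `h` differs from itself. -/
noncomputable def tau (h : ℝ) (E : Set (AddCircle (1:ℝ))) : ℝ :=
  (volume {x : AddCircle (1:ℝ) |
    E.indicator (fun _ => (1:ℝ)) (x + ((h : ℝ) : AddCircle (1:ℝ)))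
      ≠ E.indicator (fun _ => (1:ℝ)) x}).toReal

/-- The open arc of the circle which is the image of the interval `(a, a+l)`. -/
noncomputable def arc (a l : ℝ) : Set (AddCircle (1:ℝ)) :=
  (fun r : ℝ => (r : AddCircle (1:ℝ))) '' Set.Ioo a (a + l)

namespace Stmt8Aux

local instance : Fact ((0:ℝ) < 1) := ⟨one_pos⟩

local notation "𝕋" => AddCircle (1:ℝ)

lemma coe_eq_coe {x y : ℝ} (hxy : |x - y| < 1) (hc : (x : 𝕋) = (y : 𝕋)) : x = y := by
  have h0 : ((x - y : ℝ) : 𝕋) = 0 := by rw [AddCircle.coe_sub, hc, sub_self]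
  rw [AddCircle.coe_eq_zero_iff] at h0
  obtain ⟨n, hn⟩ := h0
  have hn' : (n : ℝ) = x - y := by simpa using hn
  have h1 : |(n : ℝ)| < 1 := by rw [hn']; exact hxy
  have h2 : n = 0 := by
    have h3 : |n| < 1 := by exact_mod_cast h1
    have h4 := abs_lt.mp h3
    omega
  have : x - y = 0 := by rw [← hn', h2]; simp
  linarith

lemma isOpen_arc (a l : ℝ) : IsOpen (arc a l) :=
  QuotientAddGroup.isOpenMap_coe _ isOpen_Ioo

lemma measurableSet_arc (a l : ℝ) : MeasurableSet (arc a l) :=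
  (isOpen_arc a l).measurableSet

lemma continuous_coe : Continuous (fun r : ℝ => (r : 𝕋)) := continuous_quotient_mk'

lemma volume_image_Icc_le (a b : ℝ) :
    volume ((fun r : ℝ => (r : 𝕋)) '' Icc a b) ≤ ENNReal.ofReal (b - a) := by
  rcases lt_or_ge b a with hba | hab
  · rw [Icc_eq_empty (by linarith), image_empty]; simp
  rcases le_or_gt 1 (b - a) with h1 | h1
  · calc volume ((fun r : ℝ => (r : 𝕋)) '' Icc a b) ≤ volume (univ : Set 𝕋) :=
        measure_mono (subset_univ _)
      _ = ENNReal.ofReal 1 := AddCircle.measure_univ 1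
      _ ≤ ENNReal.ofReal (b - a) := ENNReal.ofReal_le_ofReal h1
  · have hmeas : MeasurableSet ((fun r : ℝ => (r : 𝕋)) '' Icc a b) :=
      (isCompact_Icc.image continuous_coe).measurableSet
    rw [AddCircle.add_projection_respects_measure 1 (b - 1) hmeas]
    have hsub : QuotientAddGroup.mk ⁻¹' ((fun r : ℝ => (r : 𝕋)) '' Icc a b)
        ∩ Ioc (b - 1) (b - 1 + 1) ⊆ Icc a b := by
      rintro x ⟨hx1, hx2⟩
      obtain ⟨y, hy, hxy⟩ := hx1
      have hyx : y = x := by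
        apply coe_eq_coe _ hxy
        rw [abs_sub_lt_iff]
        constructor
        · have := hx2.1; have := hy.2; linarith
        · have := hx2.2; have := hy.1; linarith
      rw [← hyx]; exact hy
    calc volume (QuotientAddGroup.mk ⁻¹' ((fun r : ℝ => (r : 𝕋)) '' Icc a b)
          ∩ Ioc (b - 1) (b - 1 + 1)) ≤ volume (Icc a b) := measure_mono hsub
      _ = ENNReal.ofReal (b - a) := by rw [Real.volume_Icc]

lemma volume_arc_le (a l : ℝ) : volume (arc a l) ≤ ENNReal.ofReal l := by
  have : arc a l ⊆ (fun r : ℝ => (r : 𝕋)) '' Icc a (a + l) :=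
    image_mono Ioo_subset_Icc_self
  calc volume (arc a l) ≤ volume ((fun r : ℝ => (r : 𝕋)) '' Icc a (a + l)) :=
      measure_mono this
    _ ≤ ENNReal.ofReal (a + l - a) := volume_image_Icc_le _ _
    _ = ENNReal.ofReal l := by ring_nf

lemma volume_arc_ge (a l : ℝ) (hl1 : l ≤ 1) :
    ENNReal.ofReal l ≤ volume (arc a l) := by
  rw [AddCircle.add_projection_respects_measure 1 a (measurableSet_arc a l)]
  have hsub : Ioo a (a + l) ⊆
      QuotientAddGroup.mk ⁻¹' (arc a l) ∩ Ioc a (a + 1) := by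
    intro x hx
    exact ⟨mem_image_of_mem _ hx, ⟨hx.1, by have := hx.2; linarith⟩⟩
  calc ENNReal.ofReal l = volume (Ioo a (a + l)) := by rw [Real.volume_Ioo]; ring_nf
    _ ≤ _ := measure_mono hsub

lemma preimage_arc (a l h : ℝ) :
    (fun x : 𝕋 => x + ((h : ℝ) : 𝕋)) ⁻¹' arc a l = arc (a - h) l := by
  ext x
  constructor
  · rintro hx
    obtain ⟨s, hs, hsx⟩ := hx
    have hsx' : ((s : ℝ) : 𝕋) = x + ((h : ℝ) : 𝕋) := hsx
    refine ⟨s - h, ⟨by linarith [hs.1], by linarith [hs.2]⟩, ?_⟩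
    show ((s - h : ℝ) : 𝕋) = x
    rw [AddCircle.coe_sub, hsx']; abel
  · rintro ⟨r, hr, rfl⟩
    refine ⟨r + h, ⟨by linarith [hr.1], by linarith [hr.2]⟩, ?_⟩
    show ((r + h : ℝ) : 𝕋) = (r : ℝ) + ((h : ℝ) : 𝕋)
    rw [AddCircle.coe_add]

lemma diff_subset_left (a l h : ℝ) (hh : 0 < h) :
    arc (a - h) l \ arc a l ⊆ (fun r : ℝ => (r : 𝕋)) '' Icc (a - h) a := by
  rintro x ⟨⟨r, hr, rfl⟩, hnot⟩
  refine ⟨r, ⟨hr.1.le, ?_⟩, rfl⟩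
  by_contra hra
  push_neg at hra
  exact hnot ⟨r, ⟨hra, by linarith [hr.2]⟩, rfl⟩

lemma diff_subset_right (a l h : ℝ) (hh : 0 < h) :
    arc a l \ arc (a - h) l ⊆ (fun r : ℝ => (r : 𝕋)) '' Icc (a + l - h) (a + l) := by
  rintro x ⟨⟨r, hr, rfl⟩, hnot⟩
  refine ⟨r, ⟨?_, hr.2.le⟩, rfl⟩
  by_contra hra
  push_neg at hra
  exact hnot ⟨r, ⟨by linarith [hr.1], by linarith⟩, rfl⟩

lemma per_arc (a l h : ℝ) (hl : l ∈ Set.Ioc (0:ℝ) 1) (hh : 0 < h) :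
    volume (((fun x : 𝕋 => x + ((h : ℝ) : 𝕋)) ⁻¹' arc a l \ arc a l)
      ∪ (arc a l \ (fun x : 𝕋 => x + ((h : ℝ) : 𝕋)) ⁻¹' arc a l))
      ≤ ENNReal.ofReal (2 * min h l) := by
  rw [preimage_arc]
  rcases le_total h l with hhl | hhl
  · have hmin : min h l = h := min_eq_left hhl
    calc volume ((arc (a - h) l \ arc a l) ∪ (arc a l \ arc (a - h) l))
        ≤ volume (arc (a - h) l \ arc a l) + volume (arc a l \ arc (a - h) l) :=
          measure_union_le _ _
      _ ≤ ENNReal.ofReal (a - (a - h)) + ENNReal.ofReal (a + l - (a + l - h)) := by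
          gcongr
          · exact (measure_mono (diff_subset_left a l h hh)).trans (volume_image_Icc_le _ _)
          · exact (measure_mono (diff_subset_right a l h hh)).trans (volume_image_Icc_le _ _)
      _ = ENNReal.ofReal (2 * min h l) := by
          rw [hmin, ← ENNReal.ofReal_add (by linarith) (by linarith)]
          ring_nf
  · have hmin : min h l = l := min_eq_right hhl
    calc volume ((arc (a - h) l \ arc a l) ∪ (arc a l \ arc (a - h) l))
        ≤ volume (arc (a - h) l) + volume (arc a l) :=
          (measure_union_le _ _).trans (add_le_add
            (measure_mono (diff_subset (s := arc (a - h) l) (t := arc a l)))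
            (measure_mono (diff_subset (s := arc a l) (t := arc (a - h) l))))
      _ ≤ ENNReal.ofReal l + ENNReal.ofReal l := by
          gcongr <;> exact volume_arc_le _ _
      _ = ENNReal.ofReal (2 * min h l) := by
          rw [hmin, ← ENNReal.ofReal_add hl.1.le hl.1.le]
          ring_nf

end Stmt8Aux

open Stmt8Aux in
/-- If `E ⊆ 𝕋` is an at most countable union of pairwise disjoint open
arcs of lengths `l k`, then for every `h > 0`,
`τ(h,E) ≤ 2·Σ_{l_k ≥ h} h + 2·Σ_{l_k < h} l_k`. -/
theorem stmt_8 {ι : Type} [Countable ι] (a l : ι → ℝ) (E : Set (AddCircle (1:ℝ)))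
    (hE : E = ⋃ k, arc (a k) (l k))
    (hlen : ∀ k, l k ∈ Set.Ioc (0:ℝ) 1)
    (hdisj : Pairwise (Function.onFun Disjoint (fun k => arc (a k) (l k))))
    (h : ℝ) (hh : 0 < h) :
    tau h E ≤ 2 * (∑' _k : {k : ι // h ≤ l k}, h)
      + 2 * (∑' k : {k : ι // l k < h}, l k.1) := by
  classical
  set pre : Set (AddCircle (1:ℝ)) → Set (AddCircle (1:ℝ)) :=
    fun S => (fun x : AddCircle (1:ℝ) => x + ((h : ℝ) : AddCircle (1:ℝ))) ⁻¹' S with hpre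
  set I : ι → Set (AddCircle (1:ℝ)) := fun k => arc (a k) (l k) with hI
  set D : Set (AddCircle (1:ℝ)) := {x : AddCircle (1:ℝ) |
    E.indicator (fun _ => (1:ℝ)) (x + ((h : ℝ) : AddCircle (1:ℝ)))
      ≠ E.indicator (fun _ => (1:ℝ)) x} with hDdef
  -- Step 1: identify D with the symmetric difference
  have hD : D = (pre E \ E) ∪ (E \ pre E) := by
    ext x
    simp only [hDdef, mem_setOf_eq, mem_union, mem_diff, hpre, mem_preimage]
    by_cases h1 : x + ((h : ℝ) : AddCircle (1:ℝ)) ∈ E <;> by_cases h2 : x ∈ E <;>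
      simp [Set.indicator_apply, h1, h2]
  -- Step 2: the symmetric difference is contained in the union of per-arc symm diffs
  have hsub : D ⊆ ⋃ k, ((pre (I k) \ I k) ∪ (I k \ pre (I k))) := by
    rw [hD]
    rintro x (⟨hx1, hx2⟩ | ⟨hx1, hx2⟩)
    · have hx1' : x + ((h : ℝ) : AddCircle (1:ℝ)) ∈ ⋃ k, I k := by
        rw [← hE]; exact hx1
      obtain ⟨k, hk⟩ := mem_iUnion.1 hx1'
      refine mem_iUnion.2 ⟨k, Or.inl ⟨hk, fun hxk => hx2 ?_⟩⟩
      rw [hE]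
      exact mem_iUnion.2 ⟨k, hxk⟩
    · have hx1' : x ∈ ⋃ k, I k := by rw [← hE]; exact hx1
      obtain ⟨k, hk⟩ := mem_iUnion.1 hx1'
      refine mem_iUnion.2 ⟨k, Or.inr ⟨hk, fun hxk => hx2 ?_⟩⟩
      show x + ((h : ℝ) : AddCircle (1:ℝ)) ∈ E
      rw [hE]
      exact mem_iUnion.2 ⟨k, hxk⟩
  -- Step 3: volume bound in ℝ≥0∞
  have hvolD : volume D ≤ ∑' k, ENNReal.ofReal (2 * min h (l k)) := by
    calc volume D ≤ volume (⋃ k, ((pre (I k) \ I k) ∪ (I k \ pre (I k)))) :=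
        measure_mono hsub
      _ ≤ ∑' k, volume ((pre (I k) \ I k) ∪ (I k \ pre (I k))) := measure_iUnion_le _
      _ ≤ ∑' k, ENNReal.ofReal (2 * min h (l k)) :=
        ENNReal.tsum_le_tsum fun k => per_arc (a k) (l k) h (hlen k) hh
  -- total measure of arcs is at most 1
  have hvolsum : ∑' k, volume (I k) ≤ ENNReal.ofReal 1 := by
    rw [← measure_iUnion hdisj fun k => measurableSet_arc _ _]
    calc volume (⋃ k, I k) ≤ volume (univ : Set (AddCircle (1:ℝ))) :=
        measure_mono (subset_univ _)
      _ = ENNReal.ofReal 1 := AddCircle.measure_univ 1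
  -- Step 4: the set of long arcs is finite
  have hNfin : ({k | h ≤ l k} : Set ι).Finite := by
    by_contra hinf
    haveI : Infinite ({k | h ≤ l k} : Set ι) := Set.infinite_coe_iff.2 hinf
    have hcpos : ENNReal.ofReal (min h 1) ≠ 0 := by
      simp only [ne_eq, ENNReal.ofReal_eq_zero, not_le]
      exact lt_min hh one_pos
    have htop : (⊤ : ℝ≥0∞) = ∑' _ : ↥({k | h ≤ l k} : Set ι), ENNReal.ofReal (min h 1) :=
      (ENNReal.tsum_const_eq_top_of_ne_zero hcpos).symm
    have hle : ∑' k : ↥({k | h ≤ l k} : Set ι), ENNReal.ofReal (min h 1)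
        ≤ ∑' k, volume (I k) := by
      calc ∑' k : ↥({k | h ≤ l k} : Set ι), ENNReal.ofReal (min h 1)
          ≤ ∑' k : ↥({k | h ≤ l k} : Set ι), volume (I k.1) := by
            refine ENNReal.tsum_le_tsum fun k => ?_
            refine le_trans (ENNReal.ofReal_le_ofReal ?_) (volume_arc_ge _ _ (hlen k.1).2)
            exact le_trans (min_le_left _ _) k.2
        _ = ∑' k, ({k | h ≤ l k} : Set ι).indicator (fun k => volume (I k)) k :=
            tsum_subtype ({k | h ≤ l k} : Set ι) (fun k => volume (I k))
        _ ≤ ∑' k, volume (I k) :=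
            ENNReal.tsum_le_tsum fun k => Set.indicator_le_self _ _ k
    have : (⊤ : ℝ≥0∞) ≤ ENNReal.ofReal 1 := htop ▸ hle.trans hvolsum
    exact (lt_irrefl _ (lt_of_le_of_lt this (by simp [ENNReal.ofReal_lt_top]))).elim
  haveI hNfin' : Finite {k : ι // h ≤ l k} := hNfin
  haveI : Fintype {k : ι // h ≤ l k} := Fintype.ofFinite _
  -- Step 5: split the sum
  set A : ℝ≥0∞ := ∑' _k : {k : ι // h ≤ l k}, ENNReal.ofReal (2 * h) with hA
  set B : ℝ≥0∞ := ∑' k : {k : ι // l k < h}, ENNReal.ofReal (2 * l k.1) with hB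
  have hsplit : ∑' k, ENNReal.ofReal (2 * min h (l k)) = A + B := by
    have := (Summable.tsum_add_tsum_compl (s := ({k | h ≤ l k} : Set ι))
      (f := fun k => ENNReal.ofReal (2 * min h (l k)))
      ENNReal.summable ENNReal.summable).symm
    rw [this]
    congr 1
    · rw [hA]
      exact tsum_congr fun k => by rw [min_eq_left k.2]
    · rw [hB]
      rw [show ({k | h ≤ l k} : Set ι)ᶜ = {k | l k < h} by ext k; simp [not_le]]
      exact (tsum_congr fun k => by rw [min_eq_right (le_of_lt k.2)]).symm
  -- Finiteness of A and B
  have hAtop : A ≠ ⊤ := by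
    rw [hA, tsum_fintype]
    exact (ENNReal.sum_lt_top.2 fun k _ => ENNReal.ofReal_lt_top).ne
  have hBtop : B ≠ ⊤ := by
    have hBle : B ≤ 2 * ∑' k, volume (I k) := by
      rw [hB]
      calc ∑' k : {k : ι // l k < h}, ENNReal.ofReal (2 * l k.1)
          ≤ ∑' k : {k : ι // l k < h}, 2 * volume (I k.1) := by
            refine ENNReal.tsum_le_tsum fun k => ?_
            rw [show (2 : ℝ) * l k.1 = l k.1 + l k.1 by ring,
              ENNReal.ofReal_add (hlen k.1).1.le (hlen k.1).1.le, two_mul]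
            gcongr <;> exact volume_arc_ge _ _ (hlen k.1).2
        _ = ∑' k : ↥({k | l k < h} : Set ι), 2 * volume (I k.1) := rfl
        _ = ∑' k, ({k | l k < h} : Set ι).indicator (fun k => 2 * volume (I k)) k :=
            tsum_subtype ({k | l k < h} : Set ι) (fun k => 2 * volume (I k))
        _ ≤ ∑' k, 2 * volume (I k) :=
            ENNReal.tsum_le_tsum fun k => Set.indicator_le_self _ _ k
        _ = 2 * ∑' k, volume (I k) := ENNReal.tsum_mul_left
    refine ne_top_of_le_ne_top ?_ (hBle.trans (mul_le_mul_right hvolsum 2))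
    exact (ENNReal.mul_lt_top (by simp) ENNReal.ofReal_lt_top).ne
  -- Step 6: conclude
  have htau : tau h E = (volume D).toReal := rfl
  have hfinal : tau h E ≤ (A + B).toReal := by
    rw [htau]
    exact ENNReal.toReal_mono (by simp [hAtop, hBtop]) (hsplit ▸ hvolD)
  refine hfinal.trans (le_of_eq ?_)
  rw [ENNReal.toReal_add hAtop hBtop]
  congr 1
  · rw [hA, ENNReal.tsum_toReal_eq fun _ => ENNReal.ofReal_ne_top]
    rw [show (fun _k : {k : ι // h ≤ l k} => (ENNReal.ofReal (2 * h)).toReal)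
      = fun _k : {k : ι // h ≤ l k} => 2 * h from funext fun k =>
        ENNReal.toReal_ofReal (by linarith)]
    exact tsum_mul_left
  · rw [hB, ENNReal.tsum_toReal_eq fun _ => ENNReal.ofReal_ne_top]
    rw [show (fun k : {k : ι // l k < h} => (ENNReal.ofReal (2 * l k.1)).toReal)
      = fun k : {k : ι // l k < h} => 2 * l k.1 from funext fun k =>
        ENNReal.toReal_ofReal (by linarith [(hlen k.1).1])]
    exact tsum_mul_left
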